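/- arXiv:1609.01577 — 2 statements merged into one kernel-verified Lean document; each statement's English description precedes it below -/
import Mathlib

section
/- Let Z_1, ..., Z_J be i.i.d. standard normal random variables. There exists a universal constant K > 1 such that for all s > 0, ε > 0, J ∈ ℕ, and nonzero a ∈ ℝ^J: -log P((s²·Σ_{j≤J} a_j² Z_j²)^{1/2} ≤ ε) ≤ 2J·log(max(K, s·‖a‖₂/ε)). -/
open MeasureTheory ProbabilityTheory Real Set

-- pdf lower bound on [-1,1]
lemma pdf_lb {x : ℝ} (hx : |x| ≤ 1) : (1:ℝ)/6 ≤ gaussianPDFReal 0 1 x := by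
  have hpi : π ≤ 3.15 := by linarith [Real.pi_lt_d2]
  have he : Real.exp 1 < 2.7182818286 := Real.exp_one_lt_d9
  have h2pi : (0:ℝ) ≤ 2 * π := by positivity
  have hs : Real.sqrt (2 * π) ≤ 2.6 := by
    rw [show (2.6:ℝ) = Real.sqrt (2.6^2) by rw [Real.sqrt_sq]; norm_num]
    apply Real.sqrt_le_sqrt; nlinarith
  have hsp : 0 < Real.sqrt (2 * π) := Real.sqrt_pos.2 (by positivity)
  have hexp : Real.exp (-x^2/2) ≥ Real.exp (-1/2) := by
    apply Real.exp_le_exp.2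
    nlinarith [abs_nonneg x, sq_abs x]
  have he2 : Real.exp (-1/2) ≥ 1/1.65 := by
    rw [ge_iff_le, div_le_iff₀ (by norm_num), show (-1/2 : ℝ) = -(1/2) by norm_num,
      Real.exp_neg, inv_mul_eq_div, le_div_iff₀ (Real.exp_pos _)]
    have : Real.exp (1/2) ≤ 1.65 := by
      have hsq : Real.exp (1/2) * Real.exp (1/2) = Real.exp 1 := by
        rw [← Real.exp_add]; norm_num
      nlinarith [Real.exp_pos (1/2 : ℝ)]
    linarith
  have : gaussianPDFReal 0 1 x = (Real.sqrt (2*π))⁻¹ * Real.exp (-x^2/2) := by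
    simp [gaussianPDFReal]
  rw [this]
  have h26 : (2.6:ℝ)⁻¹ ≤ (Real.sqrt (2*π))⁻¹ := by
    apply inv_anti₀ hsp hs
  calc (1:ℝ)/6 ≤ (2.6:ℝ)⁻¹ * (1/1.65) := by norm_num
    _ ≤ (Real.sqrt (2*π))⁻¹ * Real.exp (-x^2/2) := by
        apply mul_le_mul h26 (le_trans (by norm_num) (le_trans he2 hexp)) (by norm_num)
          (by positivity)

lemma gauss_lb {t : ℝ} (ht : 0 < t) (ht1 : t ≤ 1) :
    ENNReal.ofReal (t/3) ≤ gaussianReal 0 1 (Icc (-t) t) := by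
  rw [gaussianReal_apply 0 one_ne_zero]
  calc ENNReal.ofReal (t/3) = ENNReal.ofReal (1/6) * volume (Icc (-t) t) := by
        rw [Real.volume_Icc, ← ENNReal.ofReal_mul (by norm_num)]
        ring_nf
    _ = ∫⁻ _ in Icc (-t) t, ENNReal.ofReal (1/6) := by rw [setLIntegral_const, mul_comm]
    _ ≤ ∫⁻ x in Icc (-t) t, gaussianPDF 0 1 x := by
        apply setLIntegral_mono (measurable_gaussianPDF 0 1)
        intro x hx
        exact ENNReal.ofReal_le_ofReal (pdf_lb (abs_le.2 ⟨le_trans (by linarith) hx.1, le_trans hx.2 ht1⟩))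

/-- There is a universal constant `K > 1` such that for any i.i.d. standard normals
`Z_1,...,Z_J`, any `s, ε > 0` and nonzero `a ∈ ℝ^J`,
`-log P(√(s²·Σ a_j² Z_j²) ≤ ε) ≤ 2J·log(max(K, s‖a‖₂/ε))`. -/
theorem stmt2 :
    ∃ K : ℝ, 1 < K ∧
      ∀ (Ω : Type) [MeasurableSpace Ω] (μ : Measure Ω) [IsProbabilityMeasure μ]
        (J : ℕ) (Z : Fin J → Ω → ℝ), (∀ j, Measurable (Z j)) →
          iIndepFun Z μ →
          (∀ j, μ.map (Z j) = gaussianReal 0 1) →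
          ∀ (a : Fin J → ℝ), a ≠ 0 → ∀ s ε : ℝ, 0 < s → 0 < ε →
            -Real.log
                (μ {ω | Real.sqrt (s ^ 2 * ∑ j, (a j) ^ 2 * (Z j ω) ^ 2) ≤ ε}).toReal ≤
              2 * J * Real.log (max K (s * Real.sqrt (∑ j, (a j) ^ 2) / ε)) := by
  refine ⟨3, by norm_num, ?_⟩
  intro Ω _ μ _ J Z hZm hind hmap a ha s ε hs hε
  -- basic positivity facts
  have hN2 : 0 < ∑ j, (a j) ^ 2 := by
    obtain ⟨j, hj⟩ := Function.ne_iff.1 ha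
    exact Finset.sum_pos' (fun i _ => sq_nonneg _)
      ⟨j, Finset.mem_univ j, by nlinarith [abs_pos.2 hj, sq_abs (a j)]⟩
  set na := Real.sqrt (∑ j, (a j) ^ 2) with hna_def
  have hna : 0 < na := Real.sqrt_pos.2 hN2
  have hna_sq : na ^ 2 = ∑ j, (a j) ^ 2 := Real.sq_sqrt hN2.le
  set δ : ℝ := ε / (s * na) with hδ_def
  have hδ : 0 < δ := by positivity
  set t : ℝ := min δ 1 with ht_def
  have ht : 0 < t := lt_min hδ one_pos
  have ht1 : t ≤ 1 := min_le_right _ _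
  set E := {ω | Real.sqrt (s ^ 2 * ∑ j, (a j) ^ 2 * (Z j ω) ^ 2) ≤ ε} with hE_def
  -- the small cube is contained in the event
  have hsub : (⋂ j ∈ Finset.univ, Z j ⁻¹' Icc (-t) t) ⊆ E := by
    intro ω hω
    simp only [Finset.mem_univ, iInter_true, mem_iInter, mem_preimage, mem_Icc] at hω
    have hbound : s ^ 2 * ∑ j, (a j) ^ 2 * (Z j ω) ^ 2 ≤ ε ^ 2 := by
      have hsum : ∑ j, (a j) ^ 2 * (Z j ω) ^ 2 ≤ ∑ j, (a j) ^ 2 * t ^ 2 := by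
        apply Finset.sum_le_sum
        intro j _
        have hz2 : (Z j ω) ^ 2 ≤ t ^ 2 := sq_le_sq' (hω j).1 (hω j).2
        exact mul_le_mul_of_nonneg_left hz2 (sq_nonneg _)
      have h2 : ∑ j, (a j) ^ 2 * t ^ 2 = t ^ 2 * na ^ 2 := by
        rw [hna_sq, ← Finset.sum_mul]; ring
      have htδ : t ≤ δ := min_le_left _ _
      have ht2 : t ^ 2 ≤ δ ^ 2 := by nlinarith
      have hfin : s ^ 2 * (δ ^ 2 * na ^ 2) = ε ^ 2 := by
        rw [hδ_def]; field_simp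
      nlinarith [mul_le_mul_of_nonneg_left hsum (sq_nonneg s),
        mul_le_mul_of_nonneg_left (mul_le_mul_of_nonneg_right ht2 (sq_nonneg na)) (sq_nonneg s)]
    calc Real.sqrt (s ^ 2 * ∑ j, (a j) ^ 2 * (Z j ω) ^ 2)
        ≤ Real.sqrt (ε ^ 2) := Real.sqrt_le_sqrt hbound
      _ = ε := Real.sqrt_sq hε.le
  -- independence: the cube has product probability
  have hprod : μ (⋂ j ∈ Finset.univ, Z j ⁻¹' Icc (-t) t)
      = ∏ j, μ (Z j ⁻¹' Icc (-t) t) :=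
    hind.measure_inter_preimage_eq_mul Finset.univ (fun i _ => measurableSet_Icc)
  -- each factor is at least t/3
  have hfac : ∀ j, ENNReal.ofReal (t/3) ≤ μ (Z j ⁻¹' Icc (-t) t) := by
    intro j
    rw [← Measure.map_apply (hZm j) measurableSet_Icc, hmap j]
    exact gauss_lb ht ht1
  -- lower bound for the event probability
  have hlow : ENNReal.ofReal ((t/3) ^ J) ≤ μ E := by
    calc ENNReal.ofReal ((t/3) ^ J) = (ENNReal.ofReal (t/3)) ^ J := by
          rw [ENNReal.ofReal_pow (by positivity)]
      _ = ∏ _j : Fin J, ENNReal.ofReal (t/3) := by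
          rw [Finset.prod_const, Finset.card_univ, Fintype.card_fin]
      _ ≤ ∏ j, μ (Z j ⁻¹' Icc (-t) t) :=
          Finset.prod_le_prod' (fun j _ => hfac j)
      _ = μ (⋂ j ∈ Finset.univ, Z j ⁻¹' Icc (-t) t) := hprod.symm
      _ ≤ μ E := measure_mono hsub
  have hp : (t/3) ^ J ≤ (μ E).toReal :=
    (ENNReal.ofReal_le_iff_le_toReal (measure_ne_top μ E)).1 hlow
  have hq : (0:ℝ) < (t/3) ^ J := by positivity
  -- log manipulations
  set M : ℝ := max 3 (s * na / ε) with hM_def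
  have hM3 : (3:ℝ) ≤ M := le_max_left _ _
  have hM1 : (1:ℝ) < M := lt_of_lt_of_le (by norm_num) hM3
  have hMδ : 1/δ ≤ M := by
    rw [hδ_def, one_div, inv_div]
    exact le_max_right _ _
  have h3t : 3 / t ≤ M ^ 2 := by
    rcases min_cases δ 1 with ⟨heq, hle⟩ | ⟨heq, hlt⟩
    · rw [ht_def, heq]
      calc 3 / δ = 3 * (1/δ) := by ring
        _ ≤ M * M := mul_le_mul hM3 hMδ (by positivity) (by linarith)
        _ = M ^ 2 := (sq M).symm
    · rw [ht_def, heq]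
      nlinarith
  have hlogle : Real.log (3 / t) ≤ 2 * Real.log M := by
    calc Real.log (3 / t) ≤ Real.log (M ^ 2) :=
          Real.log_le_log (by positivity) h3t
      _ = 2 * Real.log M := by rw [Real.log_pow]; push_cast; ring
  have hneg : -Real.log ((μ E).toReal) ≤ J * Real.log (3 / t) := by
    have h1 : Real.log ((t/3) ^ J) ≤ Real.log ((μ E).toReal) :=
      Real.log_le_log hq hp
    have h2 : Real.log ((t/3) ^ J) = -(J * Real.log (3/t)) := by
      rw [Real.log_pow]
      have : Real.log (t/3) = -Real.log (3/t) := by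
        rw [← Real.log_inv, inv_div]
      rw [this]; push_cast; ring
    linarith
  calc -Real.log ((μ E).toReal) ≤ J * Real.log (3 / t) := hneg
    _ ≤ J * (2 * Real.log M) := by
        apply mul_le_mul_of_nonneg_left hlogle (Nat.cast_nonneg J)
    _ = 2 * J * Real.log M := by ring
end

section
/- Let α, β, s, ε > 0, f₀ ∈ L²[0,1] with ‖f₀‖_β < ∞, and J ∈ ℕ with J ≥ (ε/‖f₀‖_β)^{−1/β}. Let H^{s,J} be the span of ψ_1,...,ψ_J with norm ‖Σ_{j≤J} h_j ψ_j‖²_{H^{s,J}} = (1/s²)Σ_{j≤J} j^{1+2α} h_j². Then inf{‖h‖²_{H^{s,J}} : h ∈ H^{s,J}, ‖h − f₀‖₂ ≤ ε} ≤ (‖f₀‖_β²/s²)·J^{max(1+2α−2β, 0)}. -/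
open MeasureTheory ProbabilityTheory Real Set

set_option maxHeartbeats 1000000 in
/-- Bound on the infimum of the squared RKHS norm over the `ε`-ball around `f₀`:
with `H^{s,J} = span(ψ_1,...,ψ_J)` (here indexed by `i < J`, with `j = i+1`) and
RKHS norm `(1/s²)Σ j^{1+2α} h_j²`, if `‖f₀‖_β² = Sβ` and `J ≥ (ε/‖f₀‖_β)^{-1/β}`, then
`inf{‖h‖²_{H^{s,J}} : ‖h − f₀‖₂ ≤ ε} ≤ (Sβ/s²)·J^{max(1+2α−2β,0)}`. -/
theorem stmt6 (α β s ε : ℝ) (hα : 0 < α) (hβ : 0 < β) (hs : 0 < s) (hε : 0 < ε)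
    (ψ : HilbertBasis ℕ ℝ (Lp ℝ 2 (volume.restrict (Set.Icc (0:ℝ) 1))))
    (f₀ : Lp ℝ 2 (volume.restrict (Set.Icc (0:ℝ) 1)))
    (Sβ : ℝ) (hSpos : 0 < Sβ)
    (hS : HasSum (fun i : ℕ => ((i : ℝ) + 1) ^ (2 * β) * (ψ.repr f₀ i) ^ 2) Sβ)
    (J : ℕ) (hJ : (ε / Real.sqrt Sβ) ^ (-(1 / β)) ≤ (J : ℝ)) :
    sInf {x : ℝ | ∃ c : ℕ → ℝ,
        ‖(∑ i ∈ Finset.range J, c i • ψ i) - f₀‖ ≤ ε ∧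
        x = 1 / s ^ 2 * ∑ i ∈ Finset.range J, ((i : ℝ) + 1) ^ (1 + 2 * α) * (c i) ^ 2} ≤
      Sβ / s ^ 2 * (J : ℝ) ^ max (1 + 2 * α - 2 * β) 0 := by

  set F : ℕ → ℝ := fun i => ψ.repr f₀ i with hFdef
  have hrpos : 0 < ε / Real.sqrt Sβ := div_pos hε (Real.sqrt_pos.mpr hSpos)
  have hJpos : (0:ℝ) < J := lt_of_lt_of_le (Real.rpow_pos_of_pos hrpos _) hJ
  have hJ1 : (1:ℝ) ≤ (J:ℝ) := by exact_mod_cast Nat.cast_pos.mp hJpos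
  -- J^{-2β} * Sβ ≤ ε²
  have hJ2β : Sβ / ε ^ 2 ≤ (J:ℝ) ^ (2*β) := by
    have h1 : ((ε / Real.sqrt Sβ) ^ (-(1 / β))) ^ (2*β) ≤ (J:ℝ) ^ (2*β) :=
      Real.rpow_le_rpow (Real.rpow_nonneg hrpos.le _) hJ (by positivity)
    calc Sβ / ε ^ 2 = (ε / Real.sqrt Sβ) ^ ((-(1/β)) * (2*β)) := by
          rw [show (-(1/β)) * (2*β) = ((-2:ℤ):ℝ) by push_cast; field_simp]
          rw [Real.rpow_intCast, zpow_neg]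
          rw [zpow_two, div_mul_div_comm, ← Real.sqrt_mul_self hSpos.le]
          field_simp
          rw [Real.sq_sqrt (Real.sqrt_nonneg _)]
      _ ≤ (J:ℝ)^(2*β) := by rw [Real.rpow_mul hrpos.le]; exact h1
  -- witness: truncated series
  set c : ℕ → ℝ := fun i => if i < J then F i else 0 with hc
  set g := (∑ i ∈ Finset.range J, F i • ψ i) - f₀ with hgdef
  have hsum_h : HasSum (fun i => c i • ψ i) (∑ i ∈ Finset.range J, F i • ψ i) := by
    have h0 : ∀ i ∉ Finset.range J, c i • ψ i = 0 := by
      intro i hi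
      simp [hc, Finset.mem_range.not.mp hi]
    have h1 : HasSum (fun i => c i • ψ i) (∑ b ∈ Finset.range J, c b • ψ b) :=
      hasSum_sum_of_ne_finset_zero h0
    have h2 : ∑ b ∈ Finset.range J, c b • ψ b = ∑ i ∈ Finset.range J, F i • ψ i :=
      Finset.sum_congr rfl (fun i hi => by simp [hc, Finset.mem_range.mp hi])
    rwa [h2] at h1
  have hg : HasSum (fun i => (c i - F i) • ψ i) g := by
    simpa [sub_smul] using hsum_h.sub (ψ.hasSum_repr f₀)
  have hinner : ∀ k, (inner ℝ (ψ k) g : ℝ) = c k - F k := by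
    intro k
    have h1 : HasSum (fun i => (inner ℝ (ψ k) ((c i - F i) • ψ i) : ℝ)) (inner ℝ (ψ k) g) :=
      hg.mapL (innerSL ℝ (ψ k))
    have h2 : (fun i => (inner ℝ (ψ k) ((c i - F i) • ψ i) : ℝ))
        = fun i => if i = k then c k - F k else 0 := by
      funext i
      rw [real_inner_smul_right, orthonormal_iff_ite.mp ψ.orthonormal k i]
      rcases eq_or_ne i k with rfl | hik
      · simp
      · simp [hik, Ne.symm hik]
    rw [h2] at h1
    exact h1.unique (hasSum_ite_eq k (c k - F k))
  have hsq : HasSum (fun i => (c i - F i) ^ 2) (‖g‖ ^ 2) := by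
    have h1 := ψ.hasSum_inner_mul_inner g g
    rw [real_inner_self_eq_norm_sq] at h1
    have h2 : (fun i => (inner ℝ g (ψ i) * inner ℝ (ψ i) g : ℝ))
        = fun i => (c i - F i) ^ 2 := by
      funext i
      have hcm : (inner ℝ g (ψ i) : ℝ) = inner ℝ (ψ i) g := real_inner_comm _ _
      rw [hcm, hinner i]
      ring
    rwa [h2] at h1
  have hJb : 0 < (J : ℝ) ^ (2 * β) := Real.rpow_pos_of_pos hJpos _
  have hnorm2 : ‖g‖ ^ 2 ≤ ((J : ℝ) ^ (2 * β))⁻¹ * Sβ := by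
    refine hasSum_le (fun i => ?_) hsq (hS.mul_left _)
    rcases lt_or_ge i J with hi | hi
    · simp only [hc, if_pos hi]
      have : (0:ℝ) ≤ ((J : ℝ) ^ (2 * β))⁻¹ * (((i:ℝ) + 1) ^ (2 * β) * F i ^ 2) := by positivity
      simpa using this
    · simp only [hc, if_neg (not_lt.mpr hi)]
      have hiJ : (J : ℝ) ≤ (i : ℝ) + 1 := by
        have : (J : ℝ) ≤ (i : ℝ) := by exact_mod_cast hi
        linarith
      have hbase : (J : ℝ) ^ (2 * β) ≤ ((i:ℝ) + 1) ^ (2 * β) :=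
        Real.rpow_le_rpow hJpos.le hiJ (by positivity)
      rw [inv_mul_eq_div, le_div_iff₀ hJb]
      nlinarith [sq_nonneg (F i)]
  have hnormeps : ‖g‖ ≤ ε := by
    have hK : ((J : ℝ) ^ (2 * β))⁻¹ * Sβ ≤ ε ^ 2 := by
      rw [inv_mul_eq_div, div_le_iff₀ hJb]
      calc Sβ ≤ (J:ℝ) ^ (2*β) * ε ^ 2 := (div_le_iff₀ (by positivity)).mp hJ2β
        _ = ε ^ 2 * (J:ℝ) ^ (2*β) := mul_comm _ _
    have h2 : ‖g‖ ^ 2 ≤ ε ^ 2 := hnorm2.trans hK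
    nlinarith [norm_nonneg g]
  -- conclude
  set m := max (1 + 2 * α - 2 * β) 0 with hm
  have hm0 : (0:ℝ) ≤ m := le_max_right _ _
  refine csInf_le_of_le ⟨0, fun x hx => ?_⟩ ⟨F, ?_, rfl⟩ ?_
  · obtain ⟨c', -, rfl⟩ := hx
    positivity
  · exact hnormeps
  · have hsumle : ∑ i ∈ Finset.range J, ((i:ℝ) + 1) ^ (1 + 2 * α) * F i ^ 2
        ≤ (J:ℝ) ^ m * Sβ := by
      have step1 : ∑ i ∈ Finset.range J, ((i:ℝ) + 1) ^ (1 + 2 * α) * F i ^ 2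
          ≤ ∑ i ∈ Finset.range J, (J:ℝ) ^ m * (((i:ℝ) + 1) ^ (2 * β) * F i ^ 2) := by
        refine Finset.sum_le_sum (fun i hi => ?_)
        have hi1 : (1:ℝ) ≤ (i:ℝ) + 1 := by
          have := Nat.cast_nonneg (α := ℝ) i; linarith
        have hiJ : ((i:ℝ) + 1) ≤ (J:ℝ) := by
          exact_mod_cast Nat.succ_le_of_lt (Finset.mem_range.mp hi)
        have h1 : ((i:ℝ)+1) ^ (1+2*α) = ((i:ℝ)+1) ^ (2*β) * ((i:ℝ)+1) ^ (1+2*α-2*β) := by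
          rw [← Real.rpow_add (by linarith)]; ring_nf
        have h2 : ((i:ℝ)+1) ^ (1+2*α-2*β) ≤ ((i:ℝ)+1) ^ m :=
          Real.rpow_le_rpow_of_exponent_le hi1 (le_max_left _ _)
        have h3 : ((i:ℝ)+1) ^ m ≤ (J:ℝ) ^ m := Real.rpow_le_rpow (by linarith) hiJ hm0
        have hb : (0:ℝ) ≤ ((i:ℝ)+1) ^ (2*β) := by positivity
        rw [h1]
        nlinarith [sq_nonneg (F i), mul_nonneg hb (sq_nonneg (F i))]
      have step2 : ∑ i ∈ Finset.range J, (((i:ℝ) + 1) ^ (2 * β) * F i ^ 2) ≤ Sβ :=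
        sum_le_hasSum (Finset.range J) (fun i _ => by positivity) hS
      calc ∑ i ∈ Finset.range J, ((i:ℝ) + 1) ^ (1 + 2 * α) * F i ^ 2
          ≤ (J:ℝ) ^ m * ∑ i ∈ Finset.range J, (((i:ℝ) + 1) ^ (2 * β) * F i ^ 2) := by
            rw [Finset.mul_sum]; exact step1
        _ ≤ (J:ℝ) ^ m * Sβ := by
            have : (0:ℝ) ≤ (J:ℝ) ^ m := Real.rpow_nonneg hJpos.le _
            nlinarith
    have hs2 : (0:ℝ) < s ^ 2 := by positivity
    calc 1 / s ^ 2 * ∑ i ∈ Finset.range J, ((i:ℝ) + 1) ^ (1 + 2 * α) * F i ^ 2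
        ≤ 1 / s ^ 2 * ((J:ℝ) ^ m * Sβ) := by
          apply mul_le_mul_of_nonneg_left hsumle (by positivity)
      _ = Sβ / s ^ 2 * (J:ℝ) ^ m := by ring
end
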